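/- Let f₁, …, f_n : ℝ^d → ℝ be differentiable and f = (1/n)Σ_{i=1}^n f_i. Assume f has minimizer x* with f* = f(x*) and is μ-quasi convex with μ ≥ 0: f* ≥ f(x) + ⟨∇f(x), x* − x⟩ + (μ/2)‖x* − x‖² for all x ∈ ℝ^d. Assume each f_i is bounded below with infimum f_i*, and set D = (2L/n)·Σ_{i=1}^n (f_i(x*) − f_i*) and δ_n = (δ − 1)/n + 1. Fix x ∈ ℝ^d and let g₁, …, g_n be random vectors in ℝ^d with E[gᵢ] = ∇f_i(x), E[‖gᵢ‖²] ≤ 2L(f_i(x) − f_i*) + σ² for each i, and E[‖(1/n)Σᵢ gᵢ‖²] ≤ 2L(f(x) − f*) + σ²/n. Let C₁, …, C_n ∈ U(δ) be unbiased compression operators whose randomness is mutually independent and independent of (g₁, …, g_n). Then for any stepsize η > 0, the point x⁺ = x − (η/n)·Σ_{i=1}^n Cᵢ(gᵢ) satisfies E[‖x⁺ − x*‖²] ≤ (1 − μη)‖x − x*‖² − 2η(1 − η δ_n L)(f(x) − f*) + η²·((δ_n − 1)D + δσ²/n). -/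

import Mathlib

open MeasureTheory
open scoped RealInnerProductSpace

section dcsgdHelpers

variable {n d : ℕ} {Ω : Fin n → Type*} [∀ i, MeasurableSpace (Ω i)]
  (κ : ∀ i, Measure (Ω i)) [∀ i, IsProbabilityMeasure (κ i)]

lemma dcsgd_pi_single_integrable (i : Fin n) (φ : Ω i → ℝ) (hφ : Integrable φ (κ i)) :
    Integrable (fun ω : ∀ j, Ω j => φ (ω i)) (Measure.pi κ) := by
  letI : ∀ j, MeasureSpace (Ω j) := fun j => ⟨κ j⟩
  haveI : ∀ j, SigmaFinite (volume : Measure (Ω j)) := fun j =>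
    inferInstanceAs (SigmaFinite (κ j))
  set f : ∀ j, Ω j → ℝ := fun j z => if h : j = i then φ (h ▸ z) else 1 with hf
  have key : ∀ ω : ∀ j, Ω j, (∏ j, f j (ω j)) = φ (ω i) := by
    intro ω
    rw [Finset.prod_eq_single i]
    · simp [hf]
    · intro b _ hb; simp [hf, hb]
    · simp
  have hint : ∀ j, Integrable (f j) (volume : Measure (Ω j)) := by
    intro j
    by_cases h : j = i
    · subst h; simp [hf]; exact hφ
    · simpa [hf, h] using (integrable_const (1:ℝ) (μ := (volume : Measure (Ω j))))
  have := MeasureTheory.Integrable.fintype_prod_dep (𝕜 := ℝ) hint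
  have h2 : (Measure.pi κ) = (volume : Measure (∀ j, Ω j)) := rfl
  rw [h2]
  exact this.congr (Filter.Eventually.of_forall fun ω => key ω)


lemma dcsgd_pi_single_integral (i : Fin n) (φ : Ω i → ℝ) :
    ∫ ω, φ (ω i) ∂(Measure.pi κ) = ∫ z, φ z ∂(κ i) := by
  letI : ∀ j, MeasureSpace (Ω j) := fun j => ⟨κ j⟩
  haveI : ∀ j, SigmaFinite (volume : Measure (Ω j)) := fun j =>
    inferInstanceAs (SigmaFinite (κ j))
  set f : ∀ j, Ω j → ℝ := fun j z => if h : j = i then φ (h ▸ z) else 1 with hf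
  have key : ∀ ω : ∀ j, Ω j, (∏ j, f j (ω j)) = φ (ω i) := by
    intro ω
    rw [Finset.prod_eq_single i]
    · simp [hf]
    · intro b _ hb; simp [hf, hb]
    · simp
  have h2 : (Measure.pi κ) = (volume : Measure (∀ j, Ω j)) := rfl
  rw [h2]
  calc ∫ ω : ∀ j, Ω j, φ (ω i) = ∫ ω : ∀ j, Ω j, ∏ j, f j (ω j) := by
        simp_rw [key]
    _ = ∏ j, ∫ z, f j z := MeasureTheory.integral_fintype_prod_eq_prod f
    _ = ∫ z, φ z ∂(κ i) := by
        rw [Finset.prod_eq_single i]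
        · simp [hf]; rfl
        · intro b _ hb; simp [hf, hb]
        · simp


lemma dcsgd_prod_two_aux {i j : Fin n} (hij : i ≠ j) (F : Fin n → ℝ)
    (hF : ∀ l, l ≠ i → l ≠ j → F l = 1) : ∏ l, F l = F i * F j := by
  rw [← Finset.mul_prod_erase Finset.univ F (Finset.mem_univ i),
    ← Finset.mul_prod_erase (Finset.univ.erase i) F
      (Finset.mem_erase.mpr ⟨fun h => hij h.symm, Finset.mem_univ j⟩)]
  have : ∏ l ∈ (Finset.univ.erase i).erase j, F l = 1 := by
    apply Finset.prod_eq_one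
    intro l hl
    exact hF l (Finset.mem_erase.mp (Finset.mem_erase.mp hl).2).1 (Finset.mem_erase.mp hl).1
  rw [this, mul_one]


lemma dcsgd_pi_pair_integrable {i j : Fin n} (hij : i ≠ j)
    (φ : Ω i → ℝ) (ψ : Ω j → ℝ) (hφ : Integrable φ (κ i)) (hψ : Integrable ψ (κ j)) :
    Integrable (fun ω : ∀ l, Ω l => φ (ω i) * ψ (ω j)) (Measure.pi κ) := by
  letI : ∀ l, MeasureSpace (Ω l) := fun l => ⟨κ l⟩
  haveI : ∀ l, SigmaFinite (volume : Measure (Ω l)) := fun l =>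
    inferInstanceAs (SigmaFinite (κ l))
  set f : ∀ l, Ω l → ℝ := fun l z =>
    (if h : l = i then φ (h ▸ z) else 1) * (if h : l = j then ψ (h ▸ z) else 1) with hf
  have key : ∀ ω : ∀ l, Ω l, (∏ l, f l (ω l)) = φ (ω i) * ψ (ω j) := by
    intro ω
    rw [dcsgd_prod_two_aux hij]
    · simp [hf, hij, hij.symm]
    · intro l h1 h2; simp [hf, h1, h2]
  have hint : ∀ l, Integrable (f l) (volume : Measure (Ω l)) := by
    intro l
    by_cases h1 : l = i
    · subst h1; simp [hf, hij]; exact hφ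
    · by_cases h2 : l = j
      · subst h2; simp [hf, h1]; exact hψ
      · simpa [hf, h1, h2] using (integrable_const (1:ℝ) (μ := (volume : Measure (Ω l))))
  have := MeasureTheory.Integrable.fintype_prod_dep (𝕜 := ℝ) hint
  exact this.congr (Filter.Eventually.of_forall fun ω => key ω)


lemma dcsgd_pi_pair_integral {i j : Fin n} (hij : i ≠ j) (φ : Ω i → ℝ) (ψ : Ω j → ℝ) :
    ∫ ω, φ (ω i) * ψ (ω j) ∂(Measure.pi κ) = (∫ z, φ z ∂(κ i)) * ∫ z, ψ z ∂(κ j) := by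
  letI : ∀ l, MeasureSpace (Ω l) := fun l => ⟨κ l⟩
  haveI : ∀ l, SigmaFinite (volume : Measure (Ω l)) := fun l =>
    inferInstanceAs (SigmaFinite (κ l))
  set f : ∀ l, Ω l → ℝ := fun l z =>
    (if h : l = i then φ (h ▸ z) else 1) * (if h : l = j then ψ (h ▸ z) else 1) with hf
  have key : ∀ ω : ∀ l, Ω l, (∏ l, f l (ω l)) = φ (ω i) * ψ (ω j) := by
    intro ω
    rw [dcsgd_prod_two_aux hij]
    · simp [hf, hij, hij.symm]
    · intro l h1 h2; simp [hf, h1, h2]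
  calc ∫ ω : ∀ l, Ω l, φ (ω i) * ψ (ω j) ∂(Measure.pi κ)
      = ∫ ω : ∀ l, Ω l, ∏ l, f l (ω l) := by simp_rw [key]; rfl
    _ = ∏ l, ∫ z, f l z := MeasureTheory.integral_fintype_prod_eq_prod f
    _ = (∫ z, φ z ∂(κ i)) * ∫ z, ψ z ∂(κ j) := by
        rw [dcsgd_prod_two_aux hij]
        · congr 1
          · simp [hf, hij]; rfl
          · simp [hf, hij.symm]; rfl
        · intro l h1 h2; simp [hf, h1, h2]


lemma dcsgd_cross_integrable (C : ∀ i, Ω i → EuclideanSpace ℝ (Fin d) → EuclideanSpace ℝ (Fin d))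
    (y : Fin n → EuclideanSpace ℝ (Fin d))
    (hCint : ∀ i, Integrable (fun z => C i z (y i)) (κ i))
    {i j : Fin n} (hij : i ≠ j) :
    Integrable (fun ω : ∀ l, Ω l => ⟪C i (ω i) (y i), C j (ω j) (y j)⟫) (Measure.pi κ) := by
  have key : ∀ ω : ∀ l, Ω l, ⟪C i (ω i) (y i), C j (ω j) (y j)⟫
      = ∑ k, (C i (ω i) (y i)) k * (C j (ω j) (y j)) k := by
    intro ω; rw [PiLp.inner_apply]; simp [RCLike.inner_apply]; exact Finset.sum_congr rfl fun _ _ => mul_comm _ _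
  simp_rw [key]
  apply integrable_finset_sum
  intro k _
  exact dcsgd_pi_pair_integrable κ hij (fun z => C i z (y i) k) (fun z => C j z (y j) k)
    ((EuclideanSpace.proj (𝕜 := ℝ) k).integrable_comp (hCint i))
    ((EuclideanSpace.proj (𝕜 := ℝ) k).integrable_comp (hCint j))


lemma dcsgd_cross_integral (C : ∀ i, Ω i → EuclideanSpace ℝ (Fin d) → EuclideanSpace ℝ (Fin d))
    (y : Fin n → EuclideanSpace ℝ (Fin d))
    (hCint : ∀ i, Integrable (fun z => C i z (y i)) (κ i))
    (hCunb : ∀ i, ∫ z, C i z (y i) ∂(κ i) = y i)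
    {i j : Fin n} (hij : i ≠ j) :
    ∫ ω, ⟪C i (ω i) (y i), C j (ω j) (y j)⟫ ∂(Measure.pi κ) = ⟪y i, y j⟫ := by
  have key : ∀ ω : ∀ l, Ω l, ⟪C i (ω i) (y i), C j (ω j) (y j)⟫
      = ∑ k, (C i (ω i) (y i)) k * (C j (ω j) (y j)) k := by
    intro ω; rw [PiLp.inner_apply]; simp [RCLike.inner_apply]; exact Finset.sum_congr rfl fun _ _ => mul_comm _ _
  simp_rw [key]
  rw [integral_finset_sum]
  · have coord : ∀ (i : Fin n) (k : Fin d), ∫ z, (C i z (y i)) k ∂(κ i) = y i k := by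
      intro i k
      have := (EuclideanSpace.proj (𝕜 := ℝ) k).integral_comp_comm (hCint i)
      simpa [hCunb i] using this
    rw [PiLp.inner_apply]
    simp only [RCLike.inner_apply, conj_trivial]
    refine Finset.sum_congr rfl fun k _ => ?_
    rw [dcsgd_pi_pair_integral κ hij (fun z => C i z (y i) k) (fun z => C j z (y j) k),
      coord i k, coord j k, mul_comm]
  · intro k _
    exact dcsgd_pi_pair_integrable κ hij (fun z => C i z (y i) k) (fun z => C j z (y j) k)
      ((EuclideanSpace.proj (𝕜 := ℝ) k).integrable_comp (hCint i))
      ((EuclideanSpace.proj (𝕜 := ℝ) k).integrable_comp (hCint j))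


lemma dcsgd_pi_moment (C : ∀ i, Ω i → EuclideanSpace ℝ (Fin d) → EuclideanSpace ℝ (Fin d))
    (y : Fin n → EuclideanSpace ℝ (Fin d))
    (hCint : ∀ i, Integrable (fun z => C i z (y i)) (κ i))
    (hCsqint : ∀ i, Integrable (fun z => ‖C i z (y i)‖ ^ 2) (κ i))
    (hCunb : ∀ i, ∫ z, C i z (y i) ∂(κ i) = y i)
    (a : EuclideanSpace ℝ (Fin d)) (c : ℝ) :
    ∫ ω, ‖a - c • ∑ i, C i (ω i) (y i)‖ ^ 2 ∂(Measure.pi κ)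
      = ‖a‖ ^ 2 - 2 * c * ⟪a, ∑ i, y i⟫
        + c ^ 2 * (‖∑ i, y i‖ ^ 2 - ∑ i, ‖y i‖ ^ 2
            + ∑ i, ∫ z, ‖C i z (y i)‖ ^ 2 ∂(κ i)) := by
  set u : Fin n → (∀ l, Ω l) → ℝ := fun i ω => ⟪a, C i (ω i) (y i)⟫ with hu_def
  set w : Fin n → Fin n → (∀ l, Ω l) → ℝ :=
    fun i j ω => ⟪C i (ω i) (y i), C j (ω j) (y j)⟫ with hw_def
  have hptw : ∀ ω : ∀ l, Ω l, ‖a - c • ∑ i, C i (ω i) (y i)‖ ^ 2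
      = ‖a‖ ^ 2 - 2 * c * ∑ i, u i ω + c ^ 2 * ∑ i, ∑ j, w i j ω := by
    intro ω
    rw [norm_sub_sq_real, real_inner_smul_right, norm_smul]
    have h1 : ⟪a, ∑ i, C i (ω i) (y i)⟫ = ∑ i, u i ω := by
      rw [inner_sum]
    have h2 : ‖∑ i, C i (ω i) (y i)‖ ^ 2 = ∑ i, ∑ j, w i j ω := by
      rw [← real_inner_self_eq_norm_sq, sum_inner]
      exact Finset.sum_congr rfl fun i _ => by rw [inner_sum]
    rw [h1, Real.norm_eq_abs, mul_pow, sq_abs, h2]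
    ring
  have hui : ∀ i, Integrable (u i) (Measure.pi κ) := fun i =>
    dcsgd_pi_single_integrable κ i (fun z => ⟪a, C i z (y i)⟫)
      ((innerSL ℝ a).integrable_comp (hCint i))
  have huint : ∀ i, ∫ ω, u i ω ∂(Measure.pi κ) = ⟪a, y i⟫ := by
    intro i
    rw [hu_def]
    rw [dcsgd_pi_single_integral κ i (fun z => ⟪a, C i z (y i)⟫)]
    rw [integral_inner (hCint i) a, hCunb i]
  have hwi : ∀ i j, Integrable (w i j) (Measure.pi κ) := by
    intro i j
    by_cases h : i = j
    · subst h
      have : w i i = fun ω => ‖C i (ω i) (y i)‖ ^ 2 := by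
        funext ω; rw [hw_def]; exact real_inner_self_eq_norm_sq _
      rw [this]
      exact dcsgd_pi_single_integrable κ i (fun z => ‖C i z (y i)‖ ^ 2) (hCsqint i)
    · exact dcsgd_cross_integrable κ C y hCint h
  have hwint : ∀ i j, ∫ ω, w i j ω ∂(Measure.pi κ)
      = if i = j then ∫ z, ‖C i z (y i)‖ ^ 2 ∂(κ i) else ⟪y i, y j⟫ := by
    intro i j
    by_cases h : i = j
    · subst h
      simp only [if_pos rfl]
      have : w i i = fun ω => ‖C i (ω i) (y i)‖ ^ 2 := by
        funext ω; rw [hw_def]; exact real_inner_self_eq_norm_sq _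
      rw [this, dcsgd_pi_single_integral κ i (fun z => ‖C i z (y i)‖ ^ 2)]
      simp
    · rw [if_neg h]
      exact dcsgd_cross_integral κ C y hCint hCunb h
  have hU : Integrable (fun ω => ∑ i, u i ω) (Measure.pi κ) :=
    integrable_finset_sum _ fun i _ => hui i
  have hW : Integrable (fun ω => ∑ i, ∑ j, w i j ω) (Measure.pi κ) :=
    integrable_finset_sum _ fun i _ => integrable_finset_sum _ fun j _ => hwi i j
  calc ∫ ω, ‖a - c • ∑ i, C i (ω i) (y i)‖ ^ 2 ∂(Measure.pi κ)
      = ∫ ω, (‖a‖ ^ 2 - 2 * c * ∑ i, u i ω + c ^ 2 * ∑ i, ∑ j, w i j ω) ∂(Measure.pi κ) := by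
        exact integral_congr_ae (Filter.Eventually.of_forall hptw)
    _ = ‖a‖ ^ 2 - 2 * c * ∑ i, ⟪a, y i⟫
        + c ^ 2 * ∑ i, ∑ j, (if i = j then ∫ z, ‖C i z (y i)‖ ^ 2 ∂(κ i) else ⟪y i, y j⟫) := by
        have hA : Integrable (fun ω : ∀ l, Ω l => ‖a‖ ^ 2 - 2 * c * ∑ i, u i ω) (Measure.pi κ) :=
          (integrable_const _).sub (hU.const_mul _)
        have hB : Integrable (fun ω : ∀ l, Ω l => c ^ 2 * ∑ i, ∑ j, w i j ω) (Measure.pi κ) :=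
          hW.const_mul _
        rw [integral_add hA hB,
          integral_sub (integrable_const _) (hU.const_mul (2 * c)),
          integral_const_mul, integral_const_mul, integral_const,
          integral_finset_sum _ (fun i _ => hui i),
          integral_finset_sum _ (fun i _ => integrable_finset_sum _ fun j _ => hwi i j)]
        simp only [measure_univ, probReal_univ, ENNReal.toReal_one, one_smul]
        congr 1
        · congr 2
          exact Finset.sum_congr rfl fun i _ => huint i
        · congr 1
          refine Finset.sum_congr rfl fun i _ => ?_
          rw [integral_finset_sum _ (fun j _ => hwi i j)]
          exact Finset.sum_congr rfl fun j _ => hwint i j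
    _ = ‖a‖ ^ 2 - 2 * c * ⟪a, ∑ i, y i⟫
        + c ^ 2 * (‖∑ i, y i‖ ^ 2 - ∑ i, ‖y i‖ ^ 2
            + ∑ i, ∫ z, ‖C i z (y i)‖ ^ 2 ∂(κ i)) := by
        congr 1
        · rw [inner_sum]
        · congr 1
          have h1 : ∀ i j : Fin n,
              (if i = j then ∫ z, ‖C i z (y i)‖ ^ 2 ∂(κ i) else ⟪y i, y j⟫)
              = ⟪y i, y j⟫ + (if i = j then (∫ z, ‖C i z (y i)‖ ^ 2 ∂(κ i)) - ‖y i‖ ^ 2 else 0) := by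
            intro i j
            by_cases h : i = j
            · subst h; rw [if_pos rfl, if_pos rfl, real_inner_self_eq_norm_sq]; ring
            · rw [if_neg h, if_neg h, add_zero]
          simp_rw [h1, Finset.sum_add_distrib]
          have h2 : ∑ i, ∑ j, ⟪y i, y j⟫ = ‖∑ i, y i‖ ^ 2 := by
            rw [← real_inner_self_eq_norm_sq, sum_inner]
            exact Finset.sum_congr rfl fun i _ => by rw [inner_sum]
          have h3 : ∀ i : Fin n, ∑ j, (if i = j then (∫ z, ‖C i z (y i)‖ ^ 2 ∂(κ i)) - ‖y i‖ ^ 2 else 0)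
              = (∫ z, ‖C i z (y i)‖ ^ 2 ∂(κ i)) - ‖y i‖ ^ 2 := by
            intro i
            rw [Finset.sum_ite_eq]
            simp
          simp_rw [h2, h3, Finset.sum_sub_distrib]
          ring
  done

end dcsgdHelpers

/-- one-step descent inequality for DCSGD. With `f = (1/n)Σ fᵢ`
`μ`-quasi convex with minimizer `x*`, `fᵢ` bounded below by `fᵢ*`, unbiased
stochastic gradients `gᵢ` at `x` with the `(L,σ²)`-expected smoothness bounds,
and mutually independent unbiased compressors `Cᵢ ∈ U(δ)` independent of the
gradients, the point `x⁺ = x − (η/n) Σᵢ Cᵢ(gᵢ)` satisfies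
`E‖x⁺ − x*‖² ≤ (1 − μη)‖x − x*‖² − 2η(1 − ηδₙL)(f(x) − f*) + η²((δₙ−1)D + δσ²/n)`. -/
theorem dcsgd_one_step_descent {d n : ℕ} (hd : 1 ≤ d) (hn : 1 ≤ n)
    (L : ℝ) (hL : 0 < L) (σ2 : ℝ) (hσ2 : 0 ≤ σ2) (δ : ℝ) (hδ : 1 ≤ δ)
    (μq : ℝ) (hμq : 0 ≤ μq)
    (f : Fin n → EuclideanSpace ℝ (Fin d) → ℝ)
    (hfdiff : ∀ i, Differentiable ℝ (f i))
    (favg : EuclideanSpace ℝ (Fin d) → ℝ)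
    (hfavg : favg = fun y => (1 / (n : ℝ)) * ∑ i, f i y)
    (xstar : EuclideanSpace ℝ (Fin d)) (hmin : ∀ y, favg xstar ≤ favg y)
    (fstar : ℝ) (hfstar : fstar = favg xstar)
    (hquasi : ∀ y, fstar ≥ favg y + ⟪gradient favg y, xstar - y⟫
      + (μq / 2) * ‖xstar - y‖ ^ 2)
    (finf : Fin n → ℝ) (hfinf : ∀ i, IsGLB (Set.range (f i)) (finf i))
    (D : ℝ) (hD : D = (2 * L / (n : ℝ)) * ∑ i, (f i xstar - finf i))
    (δn : ℝ) (hδn : δn = (δ - 1) / (n : ℝ) + 1)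
    (x : EuclideanSpace ℝ (Fin d))
    -- the stochastic gradients g₁, …, g_n at the point x
    {Ωg : Type*} [MeasurableSpace Ωg] (ν : Measure Ωg) [IsProbabilityMeasure ν]
    (g : Fin n → Ωg → EuclideanSpace ℝ (Fin d))
    (hgint : ∀ i, Integrable (g i) ν)
    (hgsqint : ∀ i, Integrable (fun ω => ‖g i ω‖ ^ 2) ν)
    (hgmean : ∀ i, ∫ ω, g i ω ∂ν = gradient (f i) x)
    (hgsq : ∀ i, ∫ ω, ‖g i ω‖ ^ 2 ∂ν ≤ 2 * L * (f i x - finf i) + σ2)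
    (hgavg : ∫ ω, ‖(1 / (n : ℝ)) • ∑ i, g i ω‖ ^ 2 ∂ν
      ≤ 2 * L * (favg x - fstar) + σ2 / (n : ℝ))
    -- the unbiased compressors C₁, …, C_n, mutually independent and independent
    -- of the stochastic gradients (product probability space)
    {Ωc : Fin n → Type*} [∀ i, MeasurableSpace (Ωc i)]
    (κ : ∀ i, Measure (Ωc i)) [∀ i, IsProbabilityMeasure (κ i)]
    (C : ∀ i, Ωc i → EuclideanSpace ℝ (Fin d) → EuclideanSpace ℝ (Fin d))
    (hCint : ∀ i y, Integrable (fun ω => C i ω y) (κ i))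
    (hCsqint : ∀ i y, Integrable (fun ω => ‖C i ω y‖ ^ 2) (κ i))
    (hCunb : ∀ i y, ∫ ω, C i ω y ∂(κ i) = y)
    (hCsq : ∀ i y, ∫ ω, ‖C i ω y‖ ^ 2 ∂(κ i) ≤ δ * ‖y‖ ^ 2)
    -- the stepsize and the resulting point x⁺
    (η : ℝ) (hη : 0 < η)
    (xplus : Ωg × (∀ i, Ωc i) → EuclideanSpace ℝ (Fin d))
    (hxplus : ∀ ω, xplus ω = x - (η / (n : ℝ)) • ∑ i, C i (ω.2 i) (g i ω.1))
    (hxplusint : Integrable (fun ω => ‖xplus ω - xstar‖ ^ 2)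
      (ν.prod (Measure.pi κ))) :
    ∫ ω, ‖xplus ω - xstar‖ ^ 2 ∂(ν.prod (Measure.pi κ))
      ≤ (1 - μq * η) * ‖x - xstar‖ ^ 2
        - 2 * η * (1 - η * δn * L) * (favg x - fstar)
        + η ^ 2 * ((δn - 1) * D + δ * σ2 / (n : ℝ)) := by
  have hN0 : (0 : ℝ) < (n : ℝ) := by exact_mod_cast hn
  have hNne : ((n : ℝ)) ≠ 0 := ne_of_gt hN0
  set N : ℝ := (n : ℝ) with hN
  set a : EuclideanSpace ℝ (Fin d) := x - xstar with ha
  set c : ℝ := η / N with hc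
  set A : ℝ := favg x - fstar with hA
  set B : ℝ := ‖x - xstar‖ ^ 2 with hB
  -- gradient of the average
  have hgrad : gradient favg x = (1 / N) • ∑ i, gradient (f i) x := by
    have hds : DifferentiableAt ℝ (fun y => ∑ i, f i y) x :=
      DifferentiableAt.fun_sum (fun i _ => (hfdiff i) x)
    have hfd : fderiv ℝ favg x = (1 / N) • ∑ i, fderiv ℝ (f i) x := by
      rw [hfavg]
      rw [fderiv_const_mul hds]
      congr 1
      exact fderiv_fun_sum (fun i _ => (hfdiff i) x)
    show (InnerProductSpace.toDual ℝ (EuclideanSpace ℝ (Fin d))).symm (fderiv ℝ favg x) = _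
    rw [hfd, _root_.map_smul, _root_.map_sum]
    rfl
  -- quasi-convexity at x
  have hG : ⟪gradient favg x, xstar - x⟫ ≤ -A - (μq / 2) * B := by
    have := hquasi x
    have hnr : ‖xstar - x‖ = ‖x - xstar‖ := norm_sub_rev _ _
    rw [hnr] at this
    rw [hA, hB]
    linarith
  set G : ℝ := ⟪gradient favg x, xstar - x⟫ with hGdef
  -- key inner products
  have hinnerA : ⟪a, ∑ i, gradient (f i) x⟫ = -(N * G) := by
    have hsum : ∑ i, gradient (f i) x = N • gradient favg x := by
      rw [hgrad, smul_smul]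
      rw [mul_one_div, div_self hNne, one_smul]
    have hxs : xstar - x = -a := by rw [ha]; abel
    have hGa : G = -⟪a, gradient favg x⟫ := by
      rw [hGdef, hxs, inner_neg_right, real_inner_comm]
    rw [hsum, real_inner_smul_right]
    rw [show ⟪a, gradient favg x⟫ = -G by rw [hGa]; ring]
    ring
  -- Fubini
  have hfub : ∫ ω, ‖xplus ω - xstar‖ ^ 2 ∂(ν.prod (Measure.pi κ))
      = ∫ ω1, (∫ ω2, ‖xplus (ω1, ω2) - xstar‖ ^ 2 ∂(Measure.pi κ)) ∂ν :=
    integral_prod _ hxplusint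
  set Φ : Ωg → ℝ := fun ω1 => ∫ ω2, ‖xplus (ω1, ω2) - xstar‖ ^ 2 ∂(Measure.pi κ) with hΦ
  have hΦint : Integrable Φ ν := hxplusint.integral_prod_left
  -- inner expectation, exactly
  have hΦeq : ∀ ω1, Φ ω1 = ‖a‖ ^ 2 - 2 * c * ⟪a, ∑ i, g i ω1⟫
      + c ^ 2 * (‖∑ i, g i ω1‖ ^ 2 - ∑ i, ‖g i ω1‖ ^ 2
          + ∑ i, ∫ z, ‖C i z (g i ω1)‖ ^ 2 ∂(κ i)) := by
    intro ω1
    have hpt : ∀ ω2 : ∀ i, Ωc i, xplus (ω1, ω2) - xstar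
        = a - c • ∑ i, C i (ω2 i) (g i ω1) := by
      intro ω2
      rw [hxplus (ω1, ω2)]
      rw [ha, hc]
      abel
    rw [hΦ]
    simp only [hpt]
    exact dcsgd_pi_moment κ C (fun i => g i ω1) (fun i => hCint i _)
      (fun i => hCsqint i _) (fun i => hCunb i _) a c
  -- the bounding function Ψ
  set Ψ : Ωg → ℝ := fun ω1 => ‖a‖ ^ 2 - 2 * c * ⟪a, ∑ i, g i ω1⟫
      + c ^ 2 * (‖∑ i, g i ω1‖ ^ 2 + (δ - 1) * ∑ i, ‖g i ω1‖ ^ 2) with hΨ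
  have hΦleΨ : ∀ ω1, Φ ω1 ≤ Ψ ω1 := by
    intro ω1
    rw [hΦeq ω1, hΨ]
    have h1 : ∑ i, ∫ z, ‖C i z (g i ω1)‖ ^ 2 ∂(κ i) ≤ δ * ∑ i, ‖g i ω1‖ ^ 2 := by
      rw [Finset.mul_sum]
      exact Finset.sum_le_sum fun i _ => hCsq i (g i ω1)
    have h4 := mul_le_mul_of_nonneg_left
      (show ‖∑ i, g i ω1‖ ^ 2 - ∑ i, ‖g i ω1‖ ^ 2 + ∑ i, ∫ z, ‖C i z (g i ω1)‖ ^ 2 ∂(κ i)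
          ≤ ‖∑ i, g i ω1‖ ^ 2 + (δ - 1) * ∑ i, ‖g i ω1‖ ^ 2 by linarith) (sq_nonneg c)
    exact add_le_add_right h4 _
  -- integrability of the pieces of Ψ
  have hsumg : Integrable (fun ω => ∑ i, g i ω) ν :=
    integrable_finset_sum _ fun i _ => hgint i
  have hinner_int : Integrable (fun ω => ⟪a, ∑ i, g i ω⟫) ν :=
    (innerSL ℝ a).integrable_comp hsumg
  have hsumsq : Integrable (fun ω => ∑ i, ‖g i ω‖ ^ 2) ν :=
    integrable_finset_sum _ fun i _ => hgsqint i
  have hnormsq : Integrable (fun ω => ‖∑ i, g i ω‖ ^ 2) ν := by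
    apply Integrable.mono' (hsumsq.const_mul N)
    · exact ((continuous_pow 2).comp continuous_norm).comp_aestronglyMeasurable
        hsumg.aestronglyMeasurable
    · refine Filter.Eventually.of_forall fun ω => ?_
      rw [Real.norm_eq_abs, abs_of_nonneg (by positivity)]
      calc ‖∑ i, g i ω‖ ^ 2 ≤ (∑ i, ‖g i ω‖) ^ 2 := by
            apply pow_le_pow_left₀ (norm_nonneg _) (norm_sum_le _ _)
        _ ≤ (Finset.univ.card : ℝ) * ∑ i, ‖g i ω‖ ^ 2 := sq_sum_le_card_mul_sum_sq
        _ = N * ∑ i, ‖g i ω‖ ^ 2 := by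
            rw [Finset.card_univ, Fintype.card_fin, ← hN]
  -- the values of the outer integrals
  set I1 : ℝ := ∫ ω, ‖∑ i, g i ω‖ ^ 2 ∂ν with hI1def
  set I2 : ℝ := ∑ i, ∫ ω, ‖g i ω‖ ^ 2 ∂ν with hI2def
  have hΨint : Integrable Ψ ν := by
    rw [hΨ]
    exact ((integrable_const _).sub (hinner_int.const_mul _)).add
      ((hnormsq.add (hsumsq.const_mul _)).const_mul _)
  have hΨval : ∫ ω, Ψ ω ∂ν = ‖a‖ ^ 2 - 2 * c * (-(N * G)) + c ^ 2 * (I1 + (δ - 1) * I2) := by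
    rw [hΨ]
    have e1 : Integrable (fun ω => ‖a‖ ^ 2 - 2 * c * ⟪a, ∑ i, g i ω⟫) ν :=
      (integrable_const _).sub (hinner_int.const_mul _)
    have e2 : Integrable (fun ω => c ^ 2 * (‖∑ i, g i ω‖ ^ 2 + (δ - 1) * ∑ i, ‖g i ω‖ ^ 2)) ν :=
      (hnormsq.add (hsumsq.const_mul _)).const_mul _
    rw [integral_add e1 e2, integral_sub (integrable_const _) (hinner_int.const_mul _),
      integral_const, integral_const_mul, integral_const_mul,
      integral_add hnormsq (hsumsq.const_mul _), integral_const_mul]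
    have hin : ∫ ω, ⟪a, ∑ i, g i ω⟫ ∂ν = -(N * G) := by
      rw [integral_inner hsumg a, integral_finset_sum _ (fun i _ => hgint i)]
      simp_rw [hgmean]
      exact hinnerA
    rw [hin, integral_finset_sum _ (fun i _ => hgsqint i)]
    simp [measure_univ]
    left; rfl
  -- bounds on I1 and I2
  have hI1 : I1 ≤ N ^ 2 * (2 * L * A) + N * σ2 := by
    have hpt : ∀ ω, ‖(1 / N) • ∑ i, g i ω‖ ^ 2 = (1 / N) ^ 2 * ‖∑ i, g i ω‖ ^ 2 := by
      intro ω
      rw [norm_smul, mul_pow, Real.norm_eq_abs, sq_abs]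
    have h' : ∫ ω, (1 / N) ^ 2 * ‖∑ i, g i ω‖ ^ 2 ∂ν ≤ 2 * L * A + σ2 / N := by
      rw [hA]
      simp_rw [← hpt]
      exact hgavg
    rw [integral_const_mul] at h'
    have h2 : I1 = N ^ 2 * ((1 / N) ^ 2 * I1) := by
      field_simp
    have h3 : N ^ 2 * (2 * L * A + σ2 / N) = N ^ 2 * (2 * L * A) + N * σ2 := by
      field_simp
    calc I1 = N ^ 2 * ((1 / N) ^ 2 * I1) := h2
      _ ≤ N ^ 2 * (2 * L * A + σ2 / N) := mul_le_mul_of_nonneg_left h' (by positivity)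
      _ = N ^ 2 * (2 * L * A) + N * σ2 := h3
  set Ssum : ℝ := ∑ i, (f i xstar - finf i) with hS
  have hsumfx : ∑ i, f i x = N * favg x := by
    rw [hfavg]; field_simp
  have hsumfxs : ∑ i, f i xstar = N * fstar := by
    rw [hfstar, hfavg]; field_simp
  have hI2 : I2 ≤ 2 * L * (N * A + Ssum) + N * σ2 := by
    have h1 : I2 ≤ ∑ i, (2 * L * (f i x - finf i) + σ2) :=
      Finset.sum_le_sum fun i _ => hgsq i
    have h2 : ∑ i, (2 * L * (f i x - finf i) + σ2)
        = 2 * L * (∑ i, (f i x - finf i)) + N * σ2 := by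
      rw [Finset.sum_add_distrib, Finset.mul_sum, Finset.sum_const, Finset.card_univ]
      simp [hN, mul_comm]
    have h3 : ∑ i, (f i x - finf i) = N * A + Ssum := by
      rw [hS, hA]
      rw [Finset.sum_sub_distrib, Finset.sum_sub_distrib, hsumfx, hsumfxs]
      ring
    rw [h2, h3] at h1
    exact h1
  have hDS : D = 2 * L / N * Ssum := by rw [hD, hS, hN]
  -- put everything together
  have hmain : ∫ ω, ‖xplus ω - xstar‖ ^ 2 ∂(ν.prod (Measure.pi κ))
      ≤ ‖a‖ ^ 2 - 2 * c * (-(N * G)) + c ^ 2 * (I1 + (δ - 1) * I2) := by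
    rw [hfub, ← hΨval]
    exact integral_mono hΦint hΨint hΦleΨ
  have haB : ‖a‖ ^ 2 = B := by rw [ha, hB]
  have hcN : c * N = η := by rw [hc]; field_simp
  -- final chain
  have hstep1 : ‖a‖ ^ 2 - 2 * c * (-(N * G)) + c ^ 2 * (I1 + (δ - 1) * I2)
      ≤ B + 2 * η * (-A - (μq / 2) * B)
        + c ^ 2 * ((N ^ 2 * (2 * L * A) + N * σ2) + (δ - 1) * (2 * L * (N * A + Ssum) + N * σ2)) := by
    have t1 : ‖a‖ ^ 2 - 2 * c * (-(N * G)) = B + 2 * η * G := by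
      rw [haB]; rw [← hcN]; ring
    have t2 : 2 * η * G ≤ 2 * η * (-A - (μq / 2) * B) :=
      mul_le_mul_of_nonneg_left hG (by linarith)
    have t3 : I1 + (δ - 1) * I2
        ≤ (N ^ 2 * (2 * L * A) + N * σ2) + (δ - 1) * (2 * L * (N * A + Ssum) + N * σ2) := by
      have := mul_le_mul_of_nonneg_left hI2 (by linarith : (0:ℝ) ≤ δ - 1)
      linarith
    have t4 : c ^ 2 * (I1 + (δ - 1) * I2)
        ≤ c ^ 2 * ((N ^ 2 * (2 * L * A) + N * σ2) + (δ - 1) * (2 * L * (N * A + Ssum) + N * σ2)) :=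
      mul_le_mul_of_nonneg_left t3 (sq_nonneg c)
    rw [t1]
    exact add_le_add (add_le_add_right t2 B) t4
  have hstep2 : B + 2 * η * (-A - (μq / 2) * B)
        + c ^ 2 * ((N ^ 2 * (2 * L * A) + N * σ2) + (δ - 1) * (2 * L * (N * A + Ssum) + N * σ2))
      = (1 - μq * η) * B - 2 * η * (1 - η * δn * L) * A
        + η ^ 2 * ((δn - 1) * D + δ * σ2 / N) := by
    rw [hδn, hDS, hc]
    field_simp
    ring
  calc ∫ ω, ‖xplus ω - xstar‖ ^ 2 ∂(ν.prod (Measure.pi κ))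
      ≤ ‖a‖ ^ 2 - 2 * c * (-(N * G)) + c ^ 2 * (I1 + (δ - 1) * I2) := hmain
    _ ≤ B + 2 * η * (-A - (μq / 2) * B)
        + c ^ 2 * ((N ^ 2 * (2 * L * A) + N * σ2) + (δ - 1) * (2 * L * (N * A + Ssum) + N * σ2)) := hstep1
    _ = (1 - μq * η) * B - 2 * η * (1 - η * δn * L) * A
        + η ^ 2 * ((δn - 1) * D + δ * σ2 / N) := hstep2
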